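/- Let d ≥ 1, let I ⊂ ℤ^d∖{0} be a finite set, and suppose m ∈ ℤ^d∖{0} is such that c_m ∈ H_∞(I) and s_m ∈ H_∞(I). Then B(c_m) ∈ H_∞(I), B(s_m) ∈ H_∞(I), and c_{2m} ∈ H_∞(I). -/

import Mathlib

open Real MeasureTheory

/-- ⟨x, m⟩ = ∑ x_j m_j for x ∈ ℝ^d, m ∈ ℤ^d. -/
noncomputable def ip (d : ℕ) (x : Fin d → ℝ) (m : Fin d → ℤ) : ℝ :=
  ∑ j, x j * (m j : ℝ)

/-- Integer inner product on ℤ^d. -/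
def ipZ (d : ℕ) (m l : Fin d → ℤ) : ℤ := ∑ j, m j * l j

/-- c_m(x) = cos⟨x,m⟩. -/
noncomputable def cmap (d : ℕ) (m : Fin d → ℤ) : (Fin d → ℝ) → ℝ :=
  fun x => Real.cos (ip d x m)

/-- s_m(x) = sin⟨x,m⟩. -/
noncomputable def smap (d : ℕ) (m : Fin d → ℤ) : (Fin d → ℝ) → ℝ :=
  fun x => Real.sin (ip d x m)

/-- B(φ)(x) = ∑_j (∂_{x_j} φ(x))². -/
noncomputable def Bop (d : ℕ) (φ : (Fin d → ℝ) → ℝ) : (Fin d → ℝ) → ℝ :=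
  fun x => ∑ j, (fderiv ℝ φ x (Pi.single j 1)) ^ 2

/-- Functions representable as θ₀ − ∑_{j=1}^n B(θ_j) with θ's in H, n ≥ 1. -/
noncomputable def BRep (d : ℕ) (H : Set ((Fin d → ℝ) → ℝ)) : Set ((Fin d → ℝ) → ℝ) :=
  { f | ∃ n : ℕ, 1 ≤ n ∧ ∃ θ₀ ∈ H, ∃ θ : Fin n → (Fin d → ℝ) → ℝ,
      (∀ j, θ j ∈ H) ∧ f = θ₀ - ∑ j, Bop d (θ j) }

/-- F(H): f such that both f and −f are representable. -/
noncomputable def Fop (d : ℕ) (H : Set ((Fin d → ℝ) → ℝ)) : Set ((Fin d → ℝ) → ℝ) :=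
  { f | f ∈ BRep d H ∧ -f ∈ BRep d H }

/-- H(I): span of {1} ∪ {c_k, s_k : k ∈ I}. -/
noncomputable def H0 (d : ℕ) (I : Finset (Fin d → ℤ)) : Set ((Fin d → ℝ) → ℝ) :=
  ↑(Submodule.span ℝ
      ({fun _ => (1:ℝ)} ∪ ⋃ k ∈ (I : Set (Fin d → ℤ)), {cmap d k, smap d k}))

noncomputable def HSeq (d : ℕ) (I : Finset (Fin d → ℤ)) : ℕ → Set ((Fin d → ℝ) → ℝ)
  | 0 => H0 d I
  | j + 1 => Fop d (HSeq d I j)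

/-- H_∞(I) = ⋃_j H_j(I). -/
noncomputable def Hinf (d : ℕ) (I : Finset (Fin d → ℤ)) : Set ((Fin d → ℝ) → ℝ) :=
  ⋃ j, HSeq d I j

/-- I generates ℤ^d over ℤ. -/
def IsGenerator (d : ℕ) (I : Finset (Fin d → ℤ)) : Prop :=
  ∀ n : Fin d → ℤ, ∃ a : (Fin d → ℤ) → ℤ, n = ∑ k ∈ I, a k • k

/-- Connectedness condition of Proposition 2.5. -/
def ConnectedSet (d : ℕ) (I : Finset (Fin d → ℤ)) : Prop :=
  ∀ l ∈ I, ∀ m ∈ I, ∃ k : ℕ, ∃ n : Fin (k + 1) → (Fin d → ℤ),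
    (∀ j, n j ∈ I) ∧ ipZ d l (n 0) ≠ 0 ∧
    (∀ j : Fin k, ipZ d (n j.castSucc) (n j.succ) ≠ 0) ∧
    ipZ d (n (Fin.last k)) m ≠ 0

/-- (2πℤ^d)-periodicity for real-valued functions. -/
def Periodic2pi (d : ℕ) (f : (Fin d → ℝ) → ℝ) : Prop :=
  ∀ (x : Fin d → ℝ) (k : Fin d → ℤ), f (x + fun j => 2 * Real.pi * (k j : ℝ)) = f x
noncomputable def Lmap (d : ℕ) (m : Fin d → ℤ) : (Fin d → ℝ) →L[ℝ] ℝ :=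
  ∑ i, (m i : ℝ) • (ContinuousLinearMap.proj i : (Fin d → ℝ) →L[ℝ] ℝ)

lemma Lmap_apply {d : ℕ} (m : Fin d → ℤ) (v : Fin d → ℝ) :
    Lmap d m v = ∑ i, (m i : ℝ) * v i := by
  simp [Lmap]

lemma Lmap_single {d : ℕ} (m : Fin d → ℤ) (j : Fin d) :
    Lmap d m (Pi.single j 1) = (m j : ℝ) := by
  simp [Lmap_apply, Pi.single_apply]

lemma hasFDerivAt_ip {d : ℕ} (m : Fin d → ℤ) (x : Fin d → ℝ) :
    HasFDerivAt (fun y => ip d y m) (Lmap d m) x := by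
  have h : (fun y : Fin d → ℝ => ip d y m) = fun y => Lmap d m y := by
    funext y
    rw [Lmap_apply]
    simp [ip, mul_comm]
  rw [h]
  exact (Lmap d m).hasFDerivAt

lemma Bop_smul_cmap {d : ℕ} (a : ℝ) (m : Fin d → ℤ) (x : Fin d → ℝ) :
    Bop d (a • cmap d m) x
      = a ^ 2 * (∑ i, ((m i : ℝ)) ^ 2) * (Real.sin (ip d x m)) ^ 2 := by
  have hf : HasFDerivAt (a • cmap d m)
      (a • ((-Real.sin (ip d x m)) • Lmap d m)) x := by
    exact ((hasFDerivAt_ip m x).cos).const_smul a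
  rw [Bop]
  have h1 : ∀ j : Fin d, fderiv ℝ (a • cmap d m) x (Pi.single j 1)
      = a * (-Real.sin (ip d x m)) * (m j : ℝ) := by
    intro j
    rw [hf.fderiv]
    simp [Lmap_single, mul_assoc]
  simp_rw [h1]
  have h2 : ∀ j : Fin d, (a * (-Real.sin (ip d x m)) * (m j : ℝ)) ^ 2
      = a ^ 2 * (Real.sin (ip d x m)) ^ 2 * (m j : ℝ) ^ 2 := by intro j; ring
  simp_rw [h2]
  rw [← Finset.mul_sum]
  ring

lemma Bop_smul_smap {d : ℕ} (a : ℝ) (m : Fin d → ℤ) (x : Fin d → ℝ) :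
    Bop d (a • smap d m) x
      = a ^ 2 * (∑ i, ((m i : ℝ)) ^ 2) * (Real.cos (ip d x m)) ^ 2 := by
  have hf : HasFDerivAt (a • smap d m)
      (a • ((Real.cos (ip d x m)) • Lmap d m)) x := by
    exact ((hasFDerivAt_ip m x).sin).const_smul a
  rw [Bop]
  have h1 : ∀ j : Fin d, fderiv ℝ (a • smap d m) x (Pi.single j 1)
      = a * (Real.cos (ip d x m)) * (m j : ℝ) := by
    intro j
    rw [hf.fderiv]
    simp [Lmap_single, mul_assoc]
  simp_rw [h1]
  have h2 : ∀ j : Fin d, (a * (Real.cos (ip d x m)) * (m j : ℝ)) ^ 2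
      = a ^ 2 * (Real.cos (ip d x m)) ^ 2 * (m j : ℝ) ^ 2 := by intro j; ring
  simp_rw [h2]
  rw [← Finset.mul_sum]
  ring

lemma Bop_cmap {d : ℕ} (m : Fin d → ℤ) (x : Fin d → ℝ) :
    Bop d (cmap d m) x
      = (∑ i, ((m i : ℝ)) ^ 2) * (Real.sin (ip d x m)) ^ 2 := by
  have := Bop_smul_cmap (d := d) 1 m x
  simpa using this

lemma Bop_smap {d : ℕ} (m : Fin d → ℤ) (x : Fin d → ℝ) :
    Bop d (smap d m) x
      = (∑ i, ((m i : ℝ)) ^ 2) * (Real.cos (ip d x m)) ^ 2 := by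
  have := Bop_smul_smap (d := d) 1 m x
  simpa using this

lemma Bop_zero {d : ℕ} (x : Fin d → ℝ) :
    Bop d (0 : (Fin d → ℝ) → ℝ) x = 0 := by
  have h : fderiv ℝ (0 : (Fin d → ℝ) → ℝ) x = 0 := fderiv_const_apply 0
  simp [Bop, h]

lemma fderiv_smul_fun {d : ℕ} (a : ℝ) (f : (Fin d → ℝ) → ℝ) (x : Fin d → ℝ) :
    fderiv ℝ (a • f) x = a • fderiv ℝ f x := by
  rcases eq_or_ne a 0 with rfl | ha
  · simp only [zero_smul]
    rw [show (0 : (Fin d → ℝ) → ℝ) = fun _ => (0:ℝ) from rfl, fderiv_const_apply]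
  · by_cases hf : DifferentiableAt ℝ f x
    · exact fderiv_const_smul hf a
    · have hnd : ¬ DifferentiableAt ℝ (a • f) x := by
        intro h
        have := h.const_smul a⁻¹
        have h2 : (fun y => a⁻¹ • (a • f) y) = f := by
          funext y; simp [smul_smul]; rw [inv_mul_cancel_left₀ ha]
        rw [smul_smul, inv_mul_cancel₀ ha, one_smul] at this
        exact hf this
      rw [fderiv_zero_of_not_differentiableAt hf,
        fderiv_zero_of_not_differentiableAt hnd]
      simp

lemma Bop_smul {d : ℕ} (a : ℝ) (f : (Fin d → ℝ) → ℝ) (x : Fin d → ℝ) :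
    Bop d (a • f) x = a ^ 2 * Bop d f x := by
  simp only [Bop, fderiv_smul_fun]
  rw [Finset.mul_sum]
  congr 1
  funext j
  simp [mul_pow]

def Good (d : ℕ) (S : Set ((Fin d → ℝ) → ℝ)) : Prop :=
  0 ∈ S ∧ (fun _ => (1:ℝ)) ∈ S ∧ (∀ f ∈ S, -f ∈ S) ∧ ∀ (a : ℝ), ∀ f ∈ S, a • f ∈ S

lemma mem_brep_of_mem {d : ℕ} {S : Set ((Fin d → ℝ) → ℝ)} (hS : Good d S)
    {f : (Fin d → ℝ) → ℝ} (hf : f ∈ S) : f ∈ BRep d S := by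
  refine ⟨1, le_refl 1, f, hf, fun _ => 0, fun _ => hS.1, ?_⟩
  funext x
  simp [Finset.sum_apply, Bop_zero]

lemma subset_fop {d : ℕ} {S : Set ((Fin d → ℝ) → ℝ)} (hS : Good d S) :
    S ⊆ Fop d S := fun f hf =>
  ⟨mem_brep_of_mem hS hf, mem_brep_of_mem hS (hS.2.2.1 f hf)⟩

lemma smul_brep {d : ℕ} {S : Set ((Fin d → ℝ) → ℝ)} (hS : Good d S)
    {a : ℝ} (ha : 0 ≤ a) {f : (Fin d → ℝ) → ℝ} (hf : f ∈ BRep d S) :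
    a • f ∈ BRep d S := by
  obtain ⟨n, hn, θ₀, hθ₀, θ, hθ, hf⟩ := hf
  refine ⟨n, hn, a • θ₀, hS.2.2.2 a θ₀ hθ₀, fun j => Real.sqrt a • θ j,
    fun j => hS.2.2.2 _ _ (hθ j), ?_⟩
  funext x
  have hx := congrFun hf x
  simp only [Pi.sub_apply, Finset.sum_apply] at hx ⊢
  have hB : ∀ j : Fin n, Bop d (Real.sqrt a • θ j) x = a * Bop d (θ j) x := by
    intro j
    rw [Bop_smul, Real.sq_sqrt ha]
  simp only [hB, Pi.smul_apply, smul_eq_mul, hx, ← Finset.mul_sum]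
  ring

lemma good_fop {d : ℕ} {S : Set ((Fin d → ℝ) → ℝ)} (hS : Good d S) :
    Good d (Fop d S) := by
  refine ⟨subset_fop hS hS.1, subset_fop hS hS.2.1, ?_, ?_⟩
  · rintro f ⟨h1, h2⟩
    exact ⟨h2, by rwa [neg_neg]⟩
  · have key : ∀ (a : ℝ), 0 ≤ a → ∀ f ∈ Fop d S, a • f ∈ Fop d S := by
      rintro a ha f ⟨h1, h2⟩
      refine ⟨smul_brep hS ha h1, ?_⟩
      have : -(a • f) = a • (-f) := by rw [smul_neg]
      rw [this]
      exact smul_brep hS ha h2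
    intro a f hf
    rcases le_or_gt 0 a with ha | ha
    · exact key a ha f hf
    · have h1 : (-a) • (-f) = a • f := by rw [smul_neg, neg_smul, neg_neg]
      rw [← h1]
      refine key (-a) (by linarith) (-f) ?_
      exact ⟨hf.2, by rw [neg_neg]; exact hf.1⟩

lemma good_hseq (d : ℕ) (I : Finset (Fin d → ℤ)) (j : ℕ) : Good d (HSeq d I j) := by
  induction j with
  | zero =>
    refine ⟨Submodule.zero_mem _, Submodule.subset_span (Or.inl rfl), ?_, ?_⟩
    · intro f hf; exact Submodule.neg_mem _ hf
    · intro a f hf; exact Submodule.smul_mem _ a hf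
  | succ j ih => exact good_fop ih

lemma hseq_mono {d : ℕ} {I : Finset (Fin d → ℤ)} {j k : ℕ} (h : j ≤ k) :
    HSeq d I j ⊆ HSeq d I k := by
  induction k with
  | zero => rw [Nat.le_zero.mp h]
  | succ k ih =>
    rcases Nat.lt_or_ge j (k+1) with h' | h'
    · exact (ih (Nat.lt_succ_iff.mp h')).trans (subset_fop (good_hseq d I k))
    · rw [Nat.le_antisymm h h']

/-- if c_m, s_m ∈ H_∞(I) for a nonzero m, then
B(c_m), B(s_m), c_{2m} ∈ H_∞(I). -/
theorem stmt5 (d : ℕ) (hd : 1 ≤ d) (I : Finset (Fin d → ℤ)) (hI : ∀ k ∈ I, k ≠ 0)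
    (m : Fin d → ℤ) (hm : m ≠ 0)
    (hc : cmap d m ∈ Hinf d I) (hs : smap d m ∈ Hinf d I) :
    Bop d (cmap d m) ∈ Hinf d I ∧ Bop d (smap d m) ∈ Hinf d I ∧
      cmap d (2 • m) ∈ Hinf d I := by
  simp only [Hinf, Set.mem_iUnion] at hc hs ⊢
  obtain ⟨j1, hc⟩ := hc
  obtain ⟨j2, hs⟩ := hs
  set j := max j1 j2 with hj
  have hc' : cmap d m ∈ HSeq d I j := hseq_mono (le_max_left _ _) hc
  have hs' : smap d m ∈ HSeq d I j := hseq_mono (le_max_right _ _) hs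
  have hG := good_hseq d I j
  set Q : ℝ := ∑ i, ((m i : ℝ)) ^ 2 with hQdef
  have hQpos : 0 < Q := by
    obtain ⟨i, hi⟩ := Function.ne_iff.mp hm
    have hmi : (m i : ℝ) ≠ 0 := Int.cast_ne_zero.mpr hi
    refine Finset.sum_pos' (fun i _ => sq_nonneg _) ⟨i, Finset.mem_univ i, by positivity⟩
  have hone : (fun _ => (1:ℝ)) ∈ HSeq d I j := hG.2.1
  have hpyth := Real.sin_sq_add_cos_sq (ip d (0 : Fin d → ℝ) m)
  have hip2 : ∀ x, ip d x (2 • m) = 2 * ip d x m := by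
    intro x
    simp only [ip, Finset.mul_sum]
    refine Finset.sum_congr rfl fun i _ => ?_
    have : ((2 • m) i : ℝ) = 2 * (m i : ℝ) := by
      rw [Pi.smul_apply, nsmul_eq_mul]
      push_cast
      ring
    rw [this]; ring
  have ha2 : (Real.sqrt (2 / Q)) ^ 2 = 2 / Q := Real.sq_sqrt (by positivity)
  have hQc : 2 / Q * Q = 2 := div_mul_cancel₀ 2 (ne_of_gt hQpos)
  have hBc : Bop d (cmap d m) ∈ HSeq d I (j + 1) := by
    constructor
    · refine ⟨1, le_rfl, Q • (fun _ => (1:ℝ)), hG.2.2.2 Q _ hone,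
        fun _ => smap d m, fun _ => hs', ?_⟩
      funext x
      simp only [Pi.sub_apply, Finset.sum_apply, Fin.sum_univ_one, Pi.smul_apply,
        smul_eq_mul]
      rw [Bop_cmap, Bop_smap]
      nlinarith [Real.sin_sq_add_cos_sq (ip d x m)]
    · refine ⟨1, le_rfl, 0, hG.1, fun _ => cmap d m, fun _ => hc', ?_⟩
      funext x
      simp only [Pi.neg_apply, Pi.sub_apply, Pi.zero_apply, Finset.sum_apply,
        Fin.sum_univ_one]
      ring
  have hBs : Bop d (smap d m) ∈ HSeq d I (j + 1) := by
    constructor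
    · refine ⟨1, le_rfl, Q • (fun _ => (1:ℝ)), hG.2.2.2 Q _ hone,
        fun _ => cmap d m, fun _ => hc', ?_⟩
      funext x
      simp only [Pi.sub_apply, Finset.sum_apply, Fin.sum_univ_one, Pi.smul_apply,
        smul_eq_mul]
      rw [Bop_cmap, Bop_smap]
      nlinarith [Real.sin_sq_add_cos_sq (ip d x m)]
    · refine ⟨1, le_rfl, 0, hG.1, fun _ => smap d m, fun _ => hs', ?_⟩
      funext x
      simp only [Pi.neg_apply, Pi.sub_apply, Pi.zero_apply, Finset.sum_apply,
        Fin.sum_univ_one]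
      ring
  have hB2 : cmap d (2 • m) ∈ HSeq d I (j + 1) := by
    constructor
    · refine ⟨1, le_rfl, (fun _ => (1:ℝ)), hone,
        fun _ => Real.sqrt (2 / Q) • cmap d m,
        fun _ => hG.2.2.2 _ _ hc', ?_⟩
      funext x
      simp only [Pi.sub_apply, Finset.sum_apply, Fin.sum_univ_one]
      rw [Bop_smul_cmap, ha2]
      show Real.cos (ip d x (2 • m)) = 1 - 2 / Q * Q * Real.sin (ip d x m) ^ 2
      rw [hip2, hQc, Real.cos_two_mul]
      nlinarith [Real.sin_sq_add_cos_sq (ip d x m)]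
    · refine ⟨1, le_rfl, (fun _ => (1:ℝ)), hone,
        fun _ => Real.sqrt (2 / Q) • smap d m,
        fun _ => hG.2.2.2 _ _ hs', ?_⟩
      funext x
      simp only [Pi.neg_apply, Pi.sub_apply, Finset.sum_apply, Fin.sum_univ_one]
      rw [Bop_smul_smap, ha2]
      show -Real.cos (ip d x (2 • m)) = 1 - 2 / Q * Q * Real.cos (ip d x m) ^ 2
      rw [hip2, hQc, Real.cos_two_mul]
      ring
  exact ⟨⟨j + 1, hBc⟩, ⟨j + 1, hBs⟩, ⟨j + 1, hB2⟩⟩
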